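/- Let G be a single cycle on k vertices of length l containing a star system F = {→ab_ic_i : i = 1,…,d} with all b_i distinct from all c_j. Then the (P,F)-attachment on G is a single cycle on k+3 vertices of length l + 6d + 3, and it contains a star system of size d + 1, namely {→yb_ic_i : i=1,…,d} ∪ {→yxz}. -/

import Mathlib

/-- The signed indicator of the directed edge `u → v`, as a (skew-symmetric) function on
ordered pairs of vertices: entry `+1` at `(u, v)`, `-1` at `(v, u)`, `0` elsewhere. -/
def edgeVec {V : Type*} [DecidableEq V] (u v : V) : V → V → ℝ := fun i j =>
  (if i = u ∧ j = v then 1 else 0) - (if i = v ∧ j = u then 1 else 0)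

/-- The signed incidence vector of the oriented triple `→abc`, which induces the directed
edges `a → b`, `b → c`, `c → a`. -/
def incVec {V : Type*} [DecidableEq V] (a b c : V) : V → V → ℝ :=
  edgeVec a b + edgeVec b c + edgeVec c a

/-- The incidence vector of an oriented triple recorded as an ordered triple. -/
def cVec {V : Type*} [DecidableEq V] (p : V × V × V) : V → V → ℝ :=
  incVec p.1 p.2.1 p.2.2

/-- The underlying 3-set of an ordered triple. -/
def tripleSet {V : Type*} [DecidableEq V] (p : V × V × V) : Finset V :=
  {p.1, p.2.1, p.2.2}

/-- The vertex set of an oriented 3-graph, given as a finite set of oriented triples. -/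
def vertexSet {V : Type*} [DecidableEq V] (G : Finset (V × V × V)) : Finset V :=
  G.biUnion tripleSet

/-- An oriented 3-graph (a finite set of ordered triples, each read as a cyclically
oriented 3-set) is well formed if each triple has three distinct vertices and no two of
its members share the same underlying 3-set. -/
def WellFormed {V : Type*} [DecidableEq V] (G : Finset (V × V × V)) : Prop :=
  (∀ p ∈ G, p.1 ≠ p.2.1 ∧ p.2.1 ≠ p.2.2 ∧ p.1 ≠ p.2.2) ∧
  ∀ p ∈ G, ∀ q ∈ G, tripleSet p = tripleSet q → p = q

/-- `C` is a cycle of the oriented 3-graph `G`: a nonempty subset of `G` admitting strictly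
positive weights whose weighted incidence vectors sum to zero. -/
def IsCycleOn {V : Type*} [DecidableEq V] (G C : Finset (V × V × V)) : Prop :=
  C.Nonempty ∧ C ⊆ G ∧
    ∃ α : V × V × V → ℝ, (∀ p ∈ C, 0 < α p) ∧ ∑ p ∈ C, α p • cVec p = 0

/-- An oriented 3-graph is a *single cycle* if its only cycle consists of all its
triples. -/
def IsSingleCycle {V : Type*} [DecidableEq V] (G : Finset (V × V × V)) : Prop :=
  IsCycleOn G G ∧ ∀ C, IsCycleOn G C → C = G

/-- A *star system*: a set of triples any two of which intersect exactly in one common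
vertex `v`. -/
def IsStarSystem {V : Type*} [DecidableEq V] (S : Finset (V × V × V)) : Prop :=
  ∃ v : V, ∀ p ∈ S, ∀ q ∈ S, p ≠ q → tripleSet p ∩ tripleSet q = {v}

section Helpers

variable {V : Type*} [DecidableEq V]

lemma edgeVec_swap (u v : V) : edgeVec v u = - edgeVec u v := by
  funext i j; simp only [edgeVec, Pi.neg_apply]; ring

lemma incVec_left {a b c : V} (u v : V) (h1 : u ≠ a) (h2 : u ≠ b) (h3 : u ≠ c) :
    incVec a b c u v = 0 := by
  simp [incVec, edgeVec, h1, h2, h3]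

lemma incVec_right {a b c : V} (u v : V) (h1 : v ≠ a) (h2 : v ≠ b) (h3 : v ≠ c) :
    incVec a b c u v = 0 := by
  simp [incVec, edgeVec, h1, h2, h3]

section
variable {a b c : V} (hab : a ≠ b) (hbc : b ≠ c) (hac : a ≠ c)
include hab hbc hac

lemma incVec_12 : incVec a b c a b = 1 := by
  simp [incVec, edgeVec, hab, hbc, hac, hab.symm, hbc.symm, hac.symm]
lemma incVec_21 : incVec a b c b a = -1 := by
  simp [incVec, edgeVec, hab, hbc, hac, hab.symm, hbc.symm, hac.symm]
lemma incVec_23 : incVec a b c b c = 1 := by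
  simp [incVec, edgeVec, hab, hbc, hac, hab.symm, hbc.symm, hac.symm]
lemma incVec_32 : incVec a b c c b = -1 := by
  simp [incVec, edgeVec, hab, hbc, hac, hab.symm, hbc.symm, hac.symm]
lemma incVec_31 : incVec a b c c a = 1 := by
  simp [incVec, edgeVec, hab, hbc, hac, hab.symm, hbc.symm, hac.symm]
lemma incVec_13 : incVec a b c a c = -1 := by
  simp [incVec, edgeVec, hab, hbc, hac, hab.symm, hbc.symm, hac.symm]
end

lemma block_identity (a b c x y z : V) :
    incVec a z c + incVec c z x + incVec c x y + incVec b c y + incVec b y z +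
      incVec b z x + incVec a b x
    = incVec a b c +
      (edgeVec a z + edgeVec x a + (edgeVec z x + edgeVec z x) + edgeVec x y + edgeVec y z) := by
  simp only [incVec]
  rw [edgeVec_swap z c, edgeVec_swap x c, edgeVec_swap y c, edgeVec_swap y b,
    edgeVec_swap z b, edgeVec_swap x b]
  abel

lemma base_identity (a x y z : V) :
    (incVec x y a + incVec a y z + (incVec x z y + incVec x z y)) +
      (edgeVec a z + edgeVec x a + (edgeVec z x + edgeVec z x) + edgeVec x y + edgeVec y z)
      = 0 := by
  simp only [incVec]
  rw [edgeVec_swap a y, edgeVec_swap a z, edgeVec_swap y z, edgeVec_swap x y,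
    edgeVec_swap a x, edgeVec_swap x z]
  abel

lemma mem_vertexSet_of_mem {G : Finset (V × V × V)} {p : V × V × V} (hp : p ∈ G) :
    p.1 ∈ vertexSet G ∧ p.2.1 ∈ vertexSet G ∧ p.2.2 ∈ vertexSet G := by
  refine ⟨?_, ?_, ?_⟩ <;> exact Finset.mem_biUnion.2 ⟨p, hp, by simp [tripleSet]⟩

section SumHelpers
variable {β M : Type*} [DecidableEq β] [AddCommMonoid M]

lemma sum_three (p q r : β) (h1 : p ≠ q) (h2 : p ≠ r) (h3 : q ≠ r) (f : β → M) :
    ∑ u ∈ ({p, q, r} : Finset β), f u = f p + f q + f r := by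
  rw [Finset.sum_insert (by simp [h1, h2]), Finset.sum_insert (by simp [h3]),
    Finset.sum_singleton, add_assoc]

lemma sum_seven (p1 p2 p3 p4 p5 p6 p7 : β)
    (h1 : p1 ∉ ({p2, p3, p4, p5, p6, p7} : Finset β))
    (h2 : p2 ∉ ({p3, p4, p5, p6, p7} : Finset β))
    (h3 : p3 ∉ ({p4, p5, p6, p7} : Finset β))
    (h4 : p4 ∉ ({p5, p6, p7} : Finset β))
    (h5 : p5 ∉ ({p6, p7} : Finset β))
    (h6 : p6 ∉ ({p7} : Finset β)) (f : β → M) :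
    ∑ u ∈ ({p1, p2, p3, p4, p5, p6, p7} : Finset β), f u
      = f p1 + f p2 + f p3 + f p4 + f p5 + f p6 + f p7 := by
  rw [Finset.sum_insert h1, Finset.sum_insert h2, Finset.sum_insert h3, Finset.sum_insert h4,
    Finset.sum_insert h5, Finset.sum_insert h6, Finset.sum_singleton]
  abel

lemma sum_split (A B : Finset β) {ι : Type*} (s : Finset ι) (N : ι → Finset β)
    (h1 : Disjoint A (B ∪ s.biUnion N)) (h2 : Disjoint B (s.biUnion N))
    (h3 : (s : Set ι).PairwiseDisjoint N) (f : β → M) :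
    ∑ p ∈ A ∪ (B ∪ s.biUnion N), f p
      = ∑ p ∈ A, f p + ∑ p ∈ B, f p + ∑ i ∈ s, ∑ p ∈ N i, f p := by
  rw [Finset.sum_union h1, Finset.sum_union h2, Finset.sum_biUnion h3, add_assoc]

lemma card_three (p q r : β) (h1 : p ≠ q) (h2 : p ≠ r) (h3 : q ≠ r) :
    ({p, q, r} : Finset β).card = 3 := by
  rw [Finset.card_insert_of_notMem (by simp [h1, h2]),
    Finset.card_insert_of_notMem (by simp [h3]), Finset.card_singleton]

lemma card_seven (p1 p2 p3 p4 p5 p6 p7 : β)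
    (h1 : p1 ∉ ({p2, p3, p4, p5, p6, p7} : Finset β))
    (h2 : p2 ∉ ({p3, p4, p5, p6, p7} : Finset β))
    (h3 : p3 ∉ ({p4, p5, p6, p7} : Finset β))
    (h4 : p4 ∉ ({p5, p6, p7} : Finset β))
    (h5 : p5 ∉ ({p6, p7} : Finset β))
    (h6 : p6 ∉ ({p7} : Finset β)) :
    ({p1, p2, p3, p4, p5, p6, p7} : Finset β).card = 7 := by
  rw [Finset.card_insert_of_notMem h1, Finset.card_insert_of_notMem h2,
    Finset.card_insert_of_notMem h3, Finset.card_insert_of_notMem h4,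
    Finset.card_insert_of_notMem h5, Finset.card_insert_of_notMem h6,
    Finset.card_singleton]

end SumHelpers

end Helpers

theorem P_attachment_star_system {V : Type*} [DecidableEq V]
    (G : Finset (V × V × V)) (hWF : WellFormed G) (hG : IsSingleCycle G)
    (k l d : ℕ) (hd : 1 ≤ d) (hk : (vertexSet G).card = k) (hl : G.card = l)
    (a : V) (b c : Fin d → V)
    (hb : Function.Injective b) (hc : Function.Injective c)
    (hbc : ∀ i j, b i ≠ c j) (hba : ∀ i, b i ≠ a) (hca : ∀ i, c i ≠ a)
    (hmem : ∀ i, (a, b i, c i) ∈ G)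
    (x y z : V) (hxy : x ≠ y) (hxz : x ≠ z) (hyz : y ≠ z)
    (hx : x ∉ vertexSet G) (hy : y ∉ vertexSet G) (hz : z ∉ vertexSet G)
    (G' : Finset (V × V × V))
    (hG' : G' = (G \ Finset.image (fun i => (a, b i, c i)) Finset.univ) ∪
      (({(x, y, a), (a, y, z), (x, z, y)} : Finset (V × V × V)) ∪
        Finset.univ.biUnion (fun i : Fin d =>
          ({(a, z, c i), (c i, z, x), (c i, x, y), (b i, c i, y),
            (b i, y, z), (b i, z, x), (a, b i, x)} : Finset (V × V × V))))) :
    IsSingleCycle G' ∧ (vertexSet G').card = k + 3 ∧ G'.card = l + 6 * d + 3 ∧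
      ∃ S : Finset (V × V × V),
        S = insert (x, z, y) (Finset.image (fun i => (b i, c i, y)) Finset.univ) ∧
        S ⊆ G' ∧ S.card = d + 1 ∧ IsStarSystem S := by
  classical
  -- abbreviations
  set F : Finset (V × V × V) := Finset.image (fun i => (a, b i, c i)) Finset.univ with hF
  set B : Finset (V × V × V) := {(x, y, a), (a, y, z), (x, z, y)} with hB
  set N : Fin d → Finset (V × V × V) := fun i =>
    {(a, z, c i), (c i, z, x), (c i, x, y), (b i, c i, y),
      (b i, y, z), (b i, z, x), (a, b i, x)} with hN
  have hG'' : G' = (G \ F) ∪ (B ∪ Finset.univ.biUnion N) := hG'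
  clear hG'
  have i0 : Fin d := ⟨0, hd⟩
  -- basic vertex facts
  have haV : a ∈ vertexSet G := (mem_vertexSet_of_mem (hmem i0)).1
  have hbV : ∀ i, b i ∈ vertexSet G := fun i => (mem_vertexSet_of_mem (hmem i)).2.1
  have hcV : ∀ i, c i ∈ vertexSet G := fun i => (mem_vertexSet_of_mem (hmem i)).2.2
  have hax : a ≠ x := fun h => hx (h ▸ haV)
  have hay : a ≠ y := fun h => hy (h ▸ haV)
  have haz : a ≠ z := fun h => hz (h ▸ haV)
  have hbx : ∀ i, b i ≠ x := fun i h => hx (h ▸ hbV i)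
  have hby : ∀ i, b i ≠ y := fun i h => hy (h ▸ hbV i)
  have hbz : ∀ i, b i ≠ z := fun i h => hz (h ▸ hbV i)
  have hcx : ∀ i, c i ≠ x := fun i h => hx (h ▸ hcV i)
  have hcy : ∀ i, c i ≠ y := fun i h => hy (h ▸ hcV i)
  have hcz : ∀ i, c i ≠ z := fun i h => hz (h ▸ hcV i)
  have hcb : ∀ i j, c i ≠ b j := fun i j => (hbc j i).symm
  have hab' : ∀ i, a ≠ b i := fun i => (hba i).symm
  have hac' : ∀ i, a ≠ c i := fun i => (hca i).symm
  -- membership basics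
  have hFG : F ⊆ G := by
    intro p hp
    rcases Finset.mem_image.1 hp with ⟨i, -, rfl⟩
    exact hmem i
  have hFcard : F.card = d := by
    rw [hF, Finset.card_image_of_injective _ (fun i j h => by
        injection h with _ h2; injection h2 with h3 _; exact hb h3),
      Finset.card_univ, Fintype.card_fin]
  have hdl : d ≤ l := by
    have := Finset.card_le_card hFG
    omega
  -- new triples are not in G
  have hnewG : ∀ p ∈ B ∪ Finset.univ.biUnion N, p ∉ G := by
    intro p hp hpG
    obtain ⟨h1, h2, h3⟩ := mem_vertexSet_of_mem hpG
    rcases Finset.mem_union.1 hp with hB' | hN'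
    · simp only [hB, Finset.mem_insert, Finset.mem_singleton] at hB'
      rcases hB' with rfl | rfl | rfl
      · exact hx h1
      · exact hy h2
      · exact hx h1
    · rcases Finset.mem_biUnion.1 hN' with ⟨j, -, hj⟩
      simp only [hN, Finset.mem_insert, Finset.mem_singleton] at hj
      rcases hj with rfl | rfl | rfl | rfl | rfl | rfl | rfl
      · exact hz h2
      · exact hz h2
      · exact hx h2
      · exact hy h3
      · exact hy h2
      · exact hz h2
      · exact hx h3
  have hdisjBN : Disjoint B (Finset.univ.biUnion N) := by
    rw [Finset.disjoint_left]
    intro p hpB hpN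
    simp only [hB, Finset.mem_insert, Finset.mem_singleton] at hpB
    rcases Finset.mem_biUnion.1 hpN with ⟨j, -, hj⟩
    simp only [hN, Finset.mem_insert, Finset.mem_singleton] at hj
    rcases hpB with rfl | rfl | rfl <;> rcases hj with h | h | h | h | h | h | h <;>
      simp only [Prod.mk.injEq] at h <;>
      first
        | exact hax h.1.symm
        | exact hax.symm h.1
        | exact (hcx j) h.1.symm
        | exact (hbx j) h.1.symm
        | exact (hac' j) h.1
        | exact (hab' j) h.1
        | exact hyz h.2.1
        | exact (hby j) h.2.1.symm
  have hNpd : ((Finset.univ : Finset (Fin d)) : Set (Fin d)).PairwiseDisjoint N := by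
    intro i _ j _ hij
    have hbij : b i ≠ b j := fun h => hij (hb h)
    have hcij : c i ≠ c j := fun h => hij (hc h)
    simp only [Function.onFun]
    rw [Finset.disjoint_left]
    intro p hpi hpj
    simp only [hN, Finset.mem_insert, Finset.mem_singleton] at hpi hpj
    rcases hpi with rfl | rfl | rfl | rfl | rfl | rfl | rfl <;>
      rcases hpj with h | h | h | h | h | h | h <;>
      simp only [Prod.mk.injEq] at h <;>
      first
        | exact hcij h.2.2
        | exact hcij h.1
        | exact hbij h.1
        | exact hbij h.2.1
        | exact (hac' j) h.1
        | exact (hab' j) h.1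
        | exact (hca i) h.1
        | exact (hba i) h.1
        | exact (hcb i j) h.1
        | exact (hbc i j) h.1
        | exact (hbz j) h.2.1.symm
        | exact (hbz i) h.2.1
  have hdisjGnew : Disjoint (G \ F) (B ∪ Finset.univ.biUnion N) := by
    rw [Finset.disjoint_left]
    intro p hp hp2
    exact hnewG p hp2 (Finset.mem_sdiff.1 hp).1
  have hBsubG' : B ⊆ G' := by
    rw [hG'']
    intro p hp
    exact Finset.mem_union_right _ (Finset.mem_union_left _ hp)
  have hNsubG' : ∀ j, N j ⊆ G' := by
    intro j p hp
    rw [hG'']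
    exact Finset.mem_union_right _ (Finset.mem_union_right _
      (Finset.mem_biUnion.2 ⟨j, Finset.mem_univ j, hp⟩))
  have hFnotG' : ∀ i, (a, b i, c i) ∉ G' := by
    intro i hmem'
    rw [hG''] at hmem'
    rcases Finset.mem_union.1 hmem' with h | h
    · exact (Finset.mem_sdiff.1 h).2 (Finset.mem_image.2 ⟨i, Finset.mem_univ i, rfl⟩)
    · exact hnewG _ h (hmem i)
  -- non-membership bundles for explicit finsets
  have hBnm1 : (x, y, a) ∉ ({(a, y, z), (x, z, y)} : Finset (V × V × V)) := by
    simp only [Finset.mem_insert, Finset.mem_singleton, Prod.mk.injEq, not_or]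
    exact ⟨fun h => hax h.1.symm, fun h => hyz h.2.1⟩
  have hBnm2 : (a, y, z) ∉ ({(x, z, y)} : Finset (V × V × V)) := by
    simp only [Finset.mem_singleton, Prod.mk.injEq]
    exact fun h => hax h.1
  have hNnm1 : ∀ i, (a, z, c i) ∉ ({(c i, z, x), (c i, x, y), (b i, c i, y),
      (b i, y, z), (b i, z, x), (a, b i, x)} : Finset (V × V × V)) := by
    intro i
    simp only [Finset.mem_insert, Finset.mem_singleton, Prod.mk.injEq, not_or]
    exact ⟨fun h => hac' i h.1, fun h => hac' i h.1, fun h => hab' i h.1,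
      fun h => hab' i h.1, fun h => hab' i h.1, fun h => hbz i h.2.1.symm⟩
  have hNnm2 : ∀ i, (c i, z, x) ∉ ({(c i, x, y), (b i, c i, y),
      (b i, y, z), (b i, z, x), (a, b i, x)} : Finset (V × V × V)) := by
    intro i
    simp only [Finset.mem_insert, Finset.mem_singleton, Prod.mk.injEq, not_or]
    exact ⟨fun h => hxz h.2.1.symm, fun h => hcb i i h.1, fun h => hcb i i h.1,
      fun h => hcb i i h.1, fun h => hca i h.1⟩
  have hNnm3 : ∀ i, (c i, x, y) ∉ ({(b i, c i, y),
      (b i, y, z), (b i, z, x), (a, b i, x)} : Finset (V × V × V)) := by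
    intro i
    simp only [Finset.mem_insert, Finset.mem_singleton, Prod.mk.injEq, not_or]
    exact ⟨fun h => hcb i i h.1, fun h => hcb i i h.1, fun h => hcb i i h.1,
      fun h => hca i h.1⟩
  have hNnm4 : ∀ i, (b i, c i, y) ∉ ({(b i, y, z), (b i, z, x), (a, b i, x)} :
      Finset (V × V × V)) := by
    intro i
    simp only [Finset.mem_insert, Finset.mem_singleton, Prod.mk.injEq, not_or]
    exact ⟨fun h => hcy i h.2.1, fun h => hcz i h.2.1, fun h => hba i h.1⟩
  have hNnm5 : ∀ i, (b i, y, z) ∉ ({(b i, z, x), (a, b i, x)} : Finset (V × V × V)) := by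
    intro i
    simp only [Finset.mem_insert, Finset.mem_singleton, Prod.mk.injEq, not_or]
    exact ⟨fun h => hyz h.2.1, fun h => hba i h.1⟩
  have hNnm6 : ∀ i, (b i, z, x) ∉ ({(a, b i, x)} : Finset (V × V × V)) := by
    intro i
    simp only [Finset.mem_singleton, Prod.mk.injEq]
    exact fun h => hba i h.1
  -- cardinalities
  have hBcard : B.card = 3 := by
    rw [hB, Finset.card_insert_of_notMem hBnm1, Finset.card_insert_of_notMem hBnm2,
      Finset.card_singleton]
  have hNcard : ∀ i, (N i).card = 7 := by
    intro i
    simp only [hN]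
    exact card_seven _ _ _ _ _ _ _ (hNnm1 i) (hNnm2 i) (hNnm3 i) (hNnm4 i) (hNnm5 i) (hNnm6 i)
  have hG'card : G'.card = l + 6 * d + 3 := by
    rw [hG'', Finset.card_union_of_disjoint hdisjGnew, Finset.card_union_of_disjoint hdisjBN,
      Finset.card_biUnion (fun i _ j _ hij => hNpd (Finset.mem_coe.2 (Finset.mem_univ i))
        (Finset.mem_coe.2 (Finset.mem_univ j)) hij),
      Finset.card_sdiff_of_subset hFG, hFcard, hl, hBcard]
    rw [Finset.sum_congr rfl (fun i _ => hNcard i), Finset.sum_const, Finset.card_univ,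
      Fintype.card_fin, smul_eq_mul]
    omega
  -- vertex set
  have hvG' : vertexSet G' = vertexSet G ∪ {x, y, z} := by
    apply Finset.Subset.antisymm
    · intro v hv
      rcases Finset.mem_biUnion.1 hv with ⟨p, hp, hvp⟩
      rw [hG''] at hp
      rcases Finset.mem_union.1 hp with h | h
      · exact Finset.mem_union_left _ (Finset.mem_biUnion.2 ⟨p, (Finset.mem_sdiff.1 h).1, hvp⟩)
      · have hsub : tripleSet p ⊆ vertexSet G ∪ {x, y, z} := by
          rcases Finset.mem_union.1 h with h | h
          · simp only [hB, Finset.mem_insert, Finset.mem_singleton] at h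
            rcases h with rfl | rfl | rfl <;> intro w hw <;>
              simp only [tripleSet, Finset.mem_insert, Finset.mem_singleton] at hw <;>
              rcases hw with rfl | rfl | rfl <;>
              simp [haV, Finset.mem_union, Finset.mem_insert]
          · rcases Finset.mem_biUnion.1 h with ⟨j, -, hj⟩
            simp only [hN, Finset.mem_insert, Finset.mem_singleton] at hj
            rcases hj with rfl | rfl | rfl | rfl | rfl | rfl | rfl <;> intro w hw <;>
              simp only [tripleSet, Finset.mem_insert, Finset.mem_singleton] at hw <;>
              rcases hw with rfl | rfl | rfl <;>
              simp [haV, hbV j, hcV j, Finset.mem_union, Finset.mem_insert]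
        exact hsub hvp
    · intro v hv
      rcases Finset.mem_union.1 hv with h | h
      · rcases Finset.mem_biUnion.1 h with ⟨p, hp, hvp⟩
        by_cases hpF : p ∈ F
        · rcases Finset.mem_image.1 hpF with ⟨j, -, rfl⟩
          simp only [tripleSet, Finset.mem_insert, Finset.mem_singleton] at hvp
          rcases hvp with rfl | rfl | rfl
          · exact Finset.mem_biUnion.2 ⟨(x, y, v), hBsubG' (by simp [hB]), by simp [tripleSet]⟩
          · exact Finset.mem_biUnion.2 ⟨(b j, c j, y), hNsubG' j (by simp [hN]),
              by simp [tripleSet]⟩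
          · exact Finset.mem_biUnion.2 ⟨(b j, c j, y), hNsubG' j (by simp [hN]),
              by simp [tripleSet]⟩
        · exact Finset.mem_biUnion.2 ⟨p, by
            rw [hG'']
            exact Finset.mem_union_left _ (Finset.mem_sdiff.2 ⟨hp, hpF⟩), hvp⟩
      · simp only [Finset.mem_insert, Finset.mem_singleton] at h
        rcases h with rfl | rfl | rfl
        · exact Finset.mem_biUnion.2 ⟨(v, y, a), hBsubG' (by simp [hB]), by simp [tripleSet]⟩
        · exact Finset.mem_biUnion.2 ⟨(x, v, a), hBsubG' (by simp [hB]), by simp [tripleSet]⟩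
        · exact Finset.mem_biUnion.2 ⟨(a, y, v), hBsubG' (by simp [hB]), by simp [tripleSet]⟩
  have hvcard : (vertexSet G').card = k + 3 := by
    rw [hvG', Finset.card_union_of_disjoint, hk, card_three x y z hxy hxz hyz]
    rw [Finset.disjoint_right]
    intro w hw
    simp only [Finset.mem_insert, Finset.mem_singleton] at hw
    rcases hw with rfl | rfl | rfl
    · exact hx
    · exact hy
    · exact hz
  -- the star system
  have hstar : ∃ S : Finset (V × V × V),
      S = insert (x, z, y) (Finset.image (fun i => (b i, c i, y)) Finset.univ) ∧
      S ⊆ G' ∧ S.card = d + 1 ∧ IsStarSystem S := by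
    refine ⟨_, rfl, ?_, ?_, ?_⟩
    · intro p hp
      rcases Finset.mem_insert.1 hp with rfl | hp
      · exact hBsubG' (by simp [hB])
      · rcases Finset.mem_image.1 hp with ⟨i, -, rfl⟩
        exact hNsubG' i (by simp [hN])
    · rw [Finset.card_insert_of_notMem, Finset.card_image_of_injective _
        (fun i j (h : (b i, c i, y) = (b j, c j, y)) => by
          simp only [Prod.mk.injEq] at h; exact hb h.1),
        Finset.card_univ, Fintype.card_fin]
      simp only [Finset.mem_image, Finset.mem_univ, true_and, Prod.mk.injEq, not_exists]
      intro i h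
      exact hbx i h.1
    · refine ⟨y, ?_⟩
      have key : ∀ p ∈ insert (x, z, y) (Finset.image (fun i => (b i, c i, y)) Finset.univ),
          ∀ q ∈ insert (x, z, y) (Finset.image (fun i => (b i, c i, y)) Finset.univ),
          p ≠ q → tripleSet p ∩ tripleSet q = {y} := by
        intro p hp q hq hpq
        have hcase : ∀ u1 u2 w1 w2 : V, u1 ≠ w1 → u1 ≠ w2 → u2 ≠ w1 → u2 ≠ w2 →
            u1 ≠ y → u2 ≠ y → w1 ≠ y → w2 ≠ y →
            tripleSet (u1, u2, y) ∩ tripleSet (w1, w2, y) = {y} := by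
          intro u1 u2 w1 w2 h11 h12 h21 h22 hu1 hu2 hw1 hw2
          ext w
          simp only [tripleSet, Finset.mem_inter, Finset.mem_insert, Finset.mem_singleton]
          constructor
          · rintro ⟨h1 | h1 | h1, h2 | h2 | h2⟩ <;>
              first
                | exact h1
                | exact h2
                | exact absurd (h1.symm.trans h2) (by assumption)
          · rintro rfl
            exact ⟨Or.inr (Or.inr rfl), Or.inr (Or.inr rfl)⟩
        rcases Finset.mem_insert.1 hp with rfl | hp' <;>
          rcases Finset.mem_insert.1 hq with rfl | hq'
        · exact absurd rfl hpq
        · rcases Finset.mem_image.1 hq' with ⟨i, -, rfl⟩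
          exact hcase x z (b i) (c i) (hbx i).symm (hcx i).symm (hbz i).symm (hcz i).symm
            hxy hyz.symm (hby i) (hcy i)
        · rcases Finset.mem_image.1 hp' with ⟨i, -, rfl⟩
          exact hcase (b i) (c i) x z (hbx i) (hbz i) (hcx i) (hcz i)
            (hby i) (hcy i) hxy hyz.symm
        · rcases Finset.mem_image.1 hp' with ⟨i, -, rfl⟩
          rcases Finset.mem_image.1 hq' with ⟨j, -, rfl⟩
          have hij : i ≠ j := by
            rintro rfl
            exact hpq rfl
          exact hcase (b i) (c i) (b j) (c j) (fun h => hij (hb h)) (hbc i j)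
            (hcb i j) (fun h => hij (hc h)) (hby i) (hcy i) (hby j) (hcy j)
      exact key
  -- sum expansion helpers
  have hGFsubG' : G \ F ⊆ G' := by rw [hG'']; exact Finset.subset_union_left
  have hsplitF : ∀ f : (V × V × V) → V → V → ℝ, ∑ p ∈ G', f p =
      ∑ p ∈ G \ F, f p + ∑ p ∈ B, f p + ∑ i, ∑ p ∈ N i, f p := by
    intro f; rw [hG'']; exact sum_split _ _ _ _ hdisjGnew hdisjBN hNpd f
  have hsplitR : ∀ f : (V × V × V) → ℝ, ∑ p ∈ G', f p =
      ∑ p ∈ G \ F, f p + ∑ p ∈ B, f p + ∑ i, ∑ p ∈ N i, f p := by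
    intro f; rw [hG'']; exact sum_split _ _ _ _ hdisjGnew hdisjBN hNpd f
  have hNexpF : ∀ (i : Fin d) (f : (V × V × V) → V → V → ℝ), ∑ p ∈ N i, f p =
      f (a, z, c i) + f (c i, z, x) + f (c i, x, y) + f (b i, c i, y) + f (b i, y, z) +
        f (b i, z, x) + f (a, b i, x) := by
    intro i f
    simp only [hN]
    exact sum_seven _ _ _ _ _ _ _ (hNnm1 i) (hNnm2 i) (hNnm3 i) (hNnm4 i) (hNnm5 i) (hNnm6 i) f
  have hNexpR : ∀ (i : Fin d) (f : (V × V × V) → ℝ), ∑ p ∈ N i, f p =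
      f (a, z, c i) + f (c i, z, x) + f (c i, x, y) + f (b i, c i, y) + f (b i, y, z) +
        f (b i, z, x) + f (a, b i, x) := by
    intro i f
    simp only [hN]
    exact sum_seven _ _ _ _ _ _ _ (hNnm1 i) (hNnm2 i) (hNnm3 i) (hNnm4 i) (hNnm5 i) (hNnm6 i) f
  have hBne1 : ((x, y, a) : V × V × V) ≠ (a, y, z) := by
    intro h; injection h with h1 _; exact hax h1.symm
  have hBne2 : ((x, y, a) : V × V × V) ≠ (x, z, y) := by
    intro h; injection h with _ h2; injection h2 with h3 _; exact hyz h3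
  have hBne3 : ((a, y, z) : V × V × V) ≠ (x, z, y) := by
    intro h; injection h with h1 _; exact hax h1
  have hBexpF : ∀ f : (V × V × V) → V → V → ℝ,
      ∑ p ∈ B, f p = f (x, y, a) + f (a, y, z) + f (x, z, y) := by
    intro f; simp only [hB]; exact sum_three _ _ _ hBne1 hBne2 hBne3 f
  have hBexpR : ∀ f : (V × V × V) → ℝ,
      ∑ p ∈ B, f p = f (x, y, a) + f (a, y, z) + f (x, z, y) := by
    intro f; simp only [hB]; exact sum_three _ _ _ hBne1 hBne2 hBne3 f
  -- the incidence-vector identities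
  set R : V → V → ℝ := edgeVec a z + edgeVec x a + (edgeVec z x + edgeVec z x) +
    edgeVec x y + edgeVec y z with hR
  have hblockF : ∀ i : Fin d, ∑ p ∈ N i, cVec p = cVec (a, b i, c i) + R := by
    intro i
    rw [hNexpF i, hR]
    exact block_identity a (b i) (c i) x y z
  have hbaseF : cVec (x, y, a) + cVec (a, y, z) + (cVec (x, z, y) + cVec (x, z, y)) + R = 0 := by
    rw [hR]; exact base_identity a x y z
  obtain ⟨⟨-, -, α, hαpos, hαsum⟩, hGuniq⟩ := hG
  set A : ℝ := ∑ i, α (a, b i, c i) with hA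
  have hApos : 0 < A := by
    have : Nonempty (Fin d) := ⟨i0⟩
    exact Finset.sum_pos (fun i _ => hαpos _ (hmem i)) Finset.univ_nonempty
  set α' : (V × V × V) → ℝ := fun p =>
    (if p ∈ G \ F then α p else 0) + (∑ i, if p ∈ N i then α (a, b i, c i) else 0) +
      (if p = (x, y, a) then A else 0) + (if p = (a, y, z) then A else 0) +
      (if p = (x, z, y) then A + A else 0) with hα'
  have nn1 : ∀ p, 0 ≤ (if p ∈ G \ F then α p else 0) := by
    intro p; split
    · exact le_of_lt (hαpos _ (Finset.mem_sdiff.1 ‹_›).1)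
    · exact le_rfl
  have nn2 : ∀ p, 0 ≤ ∑ i, (if p ∈ N i then α (a, b i, c i) else 0) := fun p =>
    Finset.sum_nonneg (fun i _ => by split; exacts [le_of_lt (hαpos _ (hmem i)), le_rfl])
  have nn3 : ∀ (q : V × V × V) (r : ℝ), 0 ≤ r → ∀ p, 0 ≤ (if p = q then r else 0) :=
    fun q r hr p => by split; exacts [hr, le_rfl]
  have hα'pos : ∀ p ∈ G', 0 < α' p := by
    intro p hp
    have n1 := nn1 p
    have n2 := nn2 p
    have n3 := nn3 (x, y, a) A hApos.le p
    have n4 := nn3 (a, y, z) A hApos.le p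
    have n5 := nn3 (x, z, y) (A + A) (by linarith) p
    rw [hG''] at hp
    simp only [hα']
    rcases Finset.mem_union.1 hp with h | h
    · have hph : 0 < (if p ∈ G \ F then α p else 0) := by
        rw [if_pos h]; exact hαpos _ (Finset.mem_sdiff.1 h).1
      linarith
    · rcases Finset.mem_union.1 h with h | h
      · simp only [hB, Finset.mem_insert, Finset.mem_singleton] at h
        rcases h with rfl | rfl | rfl
        · have e : (if ((x, y, a) : V × V × V) = (x, y, a) then A else 0) = A := if_pos rfl
          linarith [hApos]
        · have e : (if ((a, y, z) : V × V × V) = (a, y, z) then A else 0) = A := if_pos rfl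
          linarith [hApos]
        · have e : (if ((x, z, y) : V × V × V) = (x, z, y) then A + A else 0) = A + A := if_pos rfl
          linarith [hApos]
      · rcases Finset.mem_biUnion.1 h with ⟨j, -, hj⟩
        have hle : α (a, b j, c j) ≤ ∑ i, (if p ∈ N i then α (a, b i, c i) else 0) := by
          have hss := Finset.single_le_sum
            (f := fun i => if p ∈ N i then α (a, b i, c i) else 0)
            (fun i _ => by split; exacts [le_of_lt (hαpos _ (hmem i)), le_rfl])
            (Finset.mem_univ j)
          rwa [if_pos hj] at hss
        linarith [hαpos _ (hmem j)]
  have hα'sum : ∑ p ∈ G', α' p • cVec p = 0 := by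
    have expand : ∀ p, α' p • cVec p =
        (if p ∈ G \ F then α p • cVec p else 0) +
          (∑ i, if p ∈ N i then α (a, b i, c i) • cVec p else 0) +
          (if p = (x, y, a) then A • cVec p else 0) +
          (if p = (a, y, z) then A • cVec p else 0) +
          (if p = (x, z, y) then (A + A) • cVec p else 0) := by
      intro p
      simp only [hα', add_smul, ite_smul, zero_smul, Finset.sum_smul]
    rw [Finset.sum_congr rfl (fun p _ => expand p), Finset.sum_add_distrib,
      Finset.sum_add_distrib, Finset.sum_add_distrib, Finset.sum_add_distrib]
    have e1 : ∑ p ∈ G', (if p ∈ G \ F then α p • cVec p else 0) =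
        - ∑ i, α (a, b i, c i) • cVec (a, b i, c i) := by
      rw [Finset.sum_ite_mem, Finset.inter_eq_right.2 hGFsubG', Finset.sum_sdiff_eq_sub hFG,
        hαsum, hF, Finset.sum_image (fun i _ j _ h => by
          injection h with _ h2; injection h2 with h3 _; exact hb h3), zero_sub]
    have e2 : ∑ p ∈ G', (∑ i, if p ∈ N i then α (a, b i, c i) • cVec p else 0) =
        ∑ i, α (a, b i, c i) • cVec (a, b i, c i) + A • R := by
      rw [Finset.sum_comm]
      have inner : ∀ i : Fin d, ∑ p ∈ G', (if p ∈ N i then α (a, b i, c i) • cVec p else 0) =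
          α (a, b i, c i) • cVec (a, b i, c i) + α (a, b i, c i) • R := by
        intro i
        rw [Finset.sum_ite_mem, Finset.inter_eq_right.2 (hNsubG' i), ← Finset.smul_sum,
          hblockF i, smul_add]
      rw [Finset.sum_congr rfl (fun i _ => inner i), Finset.sum_add_distrib, ← Finset.sum_smul,
        ← hA]
    have e3 : ∑ p ∈ G', (if p = (x, y, a) then A • cVec p else 0) = A • cVec (x, y, a) := by
      rw [Finset.sum_ite_eq' G' (x, y, a), if_pos (hBsubG' (by simp [hB]))]
    have e4 : ∑ p ∈ G', (if p = (a, y, z) then A • cVec p else 0) = A • cVec (a, y, z) := by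
      rw [Finset.sum_ite_eq' G' (a, y, z), if_pos (hBsubG' (by simp [hB]))]
    have e5 : ∑ p ∈ G', (if p = (x, z, y) then (A + A) • cVec p else 0) =
        (A + A) • cVec (x, z, y) := by
      rw [Finset.sum_ite_eq' G' (x, z, y), if_pos (hBsubG' (by simp [hB]))]
    rw [e1, e2, e3, e4, e5]
    have hsm : A • (cVec (x, y, a) + cVec (a, y, z) + (cVec (x, z, y) + cVec (x, z, y)) + R)
        = 0 := by rw [hbaseF, smul_zero]
    simp only [smul_add] at hsm
    rw [add_smul, ← hsm]
    abel
  have hcycG' : IsCycleOn G' G' :=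
    ⟨⟨(x, z, y), hBsubG' (by simp [hB])⟩, Finset.Subset.refl _, α', hα'pos, hα'sum⟩
  have hmin : ∀ C, IsCycleOn G' C → C = G' := by
    intro C hC
    obtain ⟨hCne, hCsub, β, hβpos, hβsum⟩ := hC
    set β' : (V × V × V) → ℝ := fun p => if p ∈ C then β p else 0 with hβ'
    have hβ'nonneg : ∀ p, 0 ≤ β' p := fun p => by
      simp only [hβ']; split
      exacts [le_of_lt (hβpos _ ‹_›), le_rfl]
    have hβ'zero : ∀ p, p ∉ C → β' p = 0 := fun p hp => by
      simp only [hβ']; rw [if_neg hp]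
    have hmemC : ∀ p, 0 < β' p → p ∈ C := by
      intro p hp
      by_contra hpc
      rw [hβ'zero p hpc] at hp
      exact lt_irrefl 0 hp
    have hsum0 : ∑ p ∈ G', β' p • cVec p = 0 := by
      rw [← (Finset.sum_subset hCsub (fun p _ hp => by rw [hβ'zero p hp, zero_smul]) :
        ∑ p ∈ C, β' p • cVec p = ∑ p ∈ G', β' p • cVec p)]
      rw [Finset.sum_congr rfl (fun p hp => by rw [(by simp only [hβ', if_pos hp] :
        β' p = β p)])]
      exact hβsum
    have hold : ∀ (u w : V), w = x ∨ w = y ∨ w = z → ∑ p ∈ G \ F, β' p * cVec p u w = 0 := by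
      intro u w hw
      apply Finset.sum_eq_zero
      intro p hp
      have hpG := (Finset.mem_sdiff.1 hp).1
      obtain ⟨h1, h2, h3⟩ := mem_vertexSet_of_mem hpG
      have hcv : cVec p u w = 0 := by
        show incVec p.1 p.2.1 p.2.2 u w = 0
        rcases hw with rfl | rfl | rfl
        · exact incVec_right _ _ (fun e => hx (e ▸ h1)) (fun e => hx (e ▸ h2))
            (fun e => hx (e ▸ h3))
        · exact incVec_right _ _ (fun e => hy (e ▸ h1)) (fun e => hy (e ▸ h2))
            (fun e => hy (e ▸ h3))
        · exact incVec_right _ _ (fun e => hz (e ▸ h1)) (fun e => hz (e ▸ h2))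
            (fun e => hz (e ▸ h3))
      rw [hcv, mul_zero]
    have hEval : ∀ u v : V, ∑ p ∈ G \ F, β' p * cVec p u v +
        (β' (x, y, a) * cVec (x, y, a) u v + β' (a, y, z) * cVec (a, y, z) u v +
          β' (x, z, y) * cVec (x, z, y) u v) +
        ∑ j, (β' (a, z, c j) * cVec (a, z, c j) u v +
          β' (c j, z, x) * cVec (c j, z, x) u v +
          β' (c j, x, y) * cVec (c j, x, y) u v +
          β' (b j, c j, y) * cVec (b j, c j, y) u v +
          β' (b j, y, z) * cVec (b j, y, z) u v +
          β' (b j, z, x) * cVec (b j, z, x) u v +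
          β' (a, b j, x) * cVec (a, b j, x) u v) = 0 := by
      intro u v
      have h0 : ∑ p ∈ G', β' p * cVec p u v = 0 := by
        have happ := congrFun (congrFun hsum0 u) v
        simpa [Finset.sum_apply, Pi.smul_apply, smul_eq_mul] using happ
      rw [hsplitR (fun p => β' p * cVec p u v)] at h0
      rw [hBexpR (fun p => β' p * cVec p u v)] at h0
      rw [Finset.sum_congr rfl
        (fun j _ => hNexpR j (fun p => β' p * cVec p u v))] at h0
      exact h0
    have eq1 : ∀ i : Fin d, β' (c i, z, x) = β' (a, z, c i) := by
      intro i
      have h := hEval (c i) z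
      rw [hold (c i) z (Or.inr (Or.inr rfl))] at h
      rw [show cVec (x, y, a) (c i) z = 0 from incVec_left _ _ (hcx i) (hcy i) (hca i),
        show cVec (a, y, z) (c i) z = 0 from incVec_left _ _ (hca i) (hcy i) (hcz i),
        show cVec (x, z, y) (c i) z = 0 from incVec_left _ _ (hcx i) (hcz i) (hcy i)] at h
      have hrest : ∀ j ∈ Finset.univ, j ≠ i →
          (β' (a, z, c j) * cVec (a, z, c j) (c i) z +
            β' (c j, z, x) * cVec (c j, z, x) (c i) z +
            β' (c j, x, y) * cVec (c j, x, y) (c i) z +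
            β' (b j, c j, y) * cVec (b j, c j, y) (c i) z +
            β' (b j, y, z) * cVec (b j, y, z) (c i) z +
            β' (b j, z, x) * cVec (b j, z, x) (c i) z +
            β' (a, b j, x) * cVec (a, b j, x) (c i) z) = 0 := by
        intro j _ hji
        have hcij : c i ≠ c j := fun e => hji (hc e).symm
        have hbij : b i ≠ b j := fun e => hji (hb e).symm
        rw [show cVec (a, z, c j) (c i) z = 0 from incVec_left _ _ (hca i) (hcz i) hcij,
          show cVec (c j, z, x) (c i) z = 0 from incVec_left _ _ hcij (hcz i) (hcx i),
          show cVec (c j, x, y) (c i) z = 0 from incVec_left _ _ hcij (hcx i) (hcy i),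
          show cVec (b j, c j, y) (c i) z = 0 from incVec_left _ _ (hcb i j) hcij (hcy i),
          show cVec (b j, y, z) (c i) z = 0 from incVec_left _ _ (hcb i j) (hcy i) (hcz i),
          show cVec (b j, z, x) (c i) z = 0 from incVec_left _ _ (hcb i j) (hcz i) (hcx i),
          show cVec (a, b j, x) (c i) z = 0 from incVec_left _ _ (hca i) (hcb i j) (hcx i)]
        ring
      rw [Finset.sum_eq_single_of_mem i (Finset.mem_univ i) hrest] at h
      rw [show cVec (a, z, c i) (c i) z = (-1 : ℝ) from incVec_32 haz (hcz i).symm (hac' i),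
        show cVec (c i, z, x) (c i) z = (1 : ℝ) from incVec_12 (hcz i) hxz.symm (hcx i),
        show cVec (c i, x, y) (c i) z = 0 from incVec_right _ _ (hcz i).symm hxz.symm hyz.symm,
        show cVec (b i, c i, y) (c i) z = 0 from incVec_right _ _ (hbz i).symm (hcz i).symm hyz.symm,
        show cVec (b i, y, z) (c i) z = 0 from incVec_left _ _ (hcb i i) (hcy i) (hcz i),
        show cVec (b i, z, x) (c i) z = 0 from incVec_left _ _ (hcb i i) (hcz i) (hcx i),
        show cVec (a, b i, x) (c i) z = 0 from incVec_right _ _ haz.symm (hbz i).symm hxz.symm] at h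
      linarith
    have eq2 : ∀ i : Fin d, β' (c i, x, y) = β' (c i, z, x) := by
      intro i
      have h := hEval (c i) x
      rw [hold (c i) x (Or.inl rfl)] at h
      rw [show cVec (x, y, a) (c i) x = 0 from incVec_left _ _ (hcx i) (hcy i) (hca i),
        show cVec (a, y, z) (c i) x = 0 from incVec_left _ _ (hca i) (hcy i) (hcz i),
        show cVec (x, z, y) (c i) x = 0 from incVec_left _ _ (hcx i) (hcz i) (hcy i)] at h
      have hrest : ∀ j ∈ Finset.univ, j ≠ i →
          (β' (a, z, c j) * cVec (a, z, c j) (c i) x +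
            β' (c j, z, x) * cVec (c j, z, x) (c i) x +
            β' (c j, x, y) * cVec (c j, x, y) (c i) x +
            β' (b j, c j, y) * cVec (b j, c j, y) (c i) x +
            β' (b j, y, z) * cVec (b j, y, z) (c i) x +
            β' (b j, z, x) * cVec (b j, z, x) (c i) x +
            β' (a, b j, x) * cVec (a, b j, x) (c i) x) = 0 := by
        intro j _ hji
        have hcij : c i ≠ c j := fun e => hji (hc e).symm
        have hbij : b i ≠ b j := fun e => hji (hb e).symm
        rw [show cVec (a, z, c j) (c i) x = 0 from incVec_left _ _ (hca i) (hcz i) hcij,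
          show cVec (c j, z, x) (c i) x = 0 from incVec_left _ _ hcij (hcz i) (hcx i),
          show cVec (c j, x, y) (c i) x = 0 from incVec_left _ _ hcij (hcx i) (hcy i),
          show cVec (b j, c j, y) (c i) x = 0 from incVec_left _ _ (hcb i j) hcij (hcy i),
          show cVec (b j, y, z) (c i) x = 0 from incVec_left _ _ (hcb i j) (hcy i) (hcz i),
          show cVec (b j, z, x) (c i) x = 0 from incVec_left _ _ (hcb i j) (hcz i) (hcx i),
          show cVec (a, b j, x) (c i) x = 0 from incVec_left _ _ (hca i) (hcb i j) (hcx i)]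
        ring
      rw [Finset.sum_eq_single_of_mem i (Finset.mem_univ i) hrest] at h
      rw [show cVec (a, z, c i) (c i) x = 0 from incVec_right _ _ hax.symm hxz (hcx i).symm,
        show cVec (c i, z, x) (c i) x = (-1 : ℝ) from incVec_13 (hcz i) hxz.symm (hcx i),
        show cVec (c i, x, y) (c i) x = (1 : ℝ) from incVec_12 (hcx i) hxy (hcy i),
        show cVec (b i, c i, y) (c i) x = 0 from incVec_right _ _ (hbx i).symm (hcx i).symm hxy,
        show cVec (b i, y, z) (c i) x = 0 from incVec_left _ _ (hcb i i) (hcy i) (hcz i),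
        show cVec (b i, z, x) (c i) x = 0 from incVec_left _ _ (hcb i i) (hcz i) (hcx i),
        show cVec (a, b i, x) (c i) x = 0 from incVec_left _ _ (hca i) (hcb i i) (hcx i)] at h
      linarith
    have eq3 : ∀ i : Fin d, β' (b i, c i, y) = β' (c i, x, y) := by
      intro i
      have h := hEval (c i) y
      rw [hold (c i) y (Or.inr (Or.inl rfl))] at h
      rw [show cVec (x, y, a) (c i) y = 0 from incVec_left _ _ (hcx i) (hcy i) (hca i),
        show cVec (a, y, z) (c i) y = 0 from incVec_left _ _ (hca i) (hcy i) (hcz i),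
        show cVec (x, z, y) (c i) y = 0 from incVec_left _ _ (hcx i) (hcz i) (hcy i)] at h
      have hrest : ∀ j ∈ Finset.univ, j ≠ i →
          (β' (a, z, c j) * cVec (a, z, c j) (c i) y +
            β' (c j, z, x) * cVec (c j, z, x) (c i) y +
            β' (c j, x, y) * cVec (c j, x, y) (c i) y +
            β' (b j, c j, y) * cVec (b j, c j, y) (c i) y +
            β' (b j, y, z) * cVec (b j, y, z) (c i) y +
            β' (b j, z, x) * cVec (b j, z, x) (c i) y +
            β' (a, b j, x) * cVec (a, b j, x) (c i) y) = 0 := by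
        intro j _ hji
        have hcij : c i ≠ c j := fun e => hji (hc e).symm
        have hbij : b i ≠ b j := fun e => hji (hb e).symm
        rw [show cVec (a, z, c j) (c i) y = 0 from incVec_left _ _ (hca i) (hcz i) hcij,
          show cVec (c j, z, x) (c i) y = 0 from incVec_left _ _ hcij (hcz i) (hcx i),
          show cVec (c j, x, y) (c i) y = 0 from incVec_left _ _ hcij (hcx i) (hcy i),
          show cVec (b j, c j, y) (c i) y = 0 from incVec_left _ _ (hcb i j) hcij (hcy i),
          show cVec (b j, y, z) (c i) y = 0 from incVec_left _ _ (hcb i j) (hcy i) (hcz i),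
          show cVec (b j, z, x) (c i) y = 0 from incVec_left _ _ (hcb i j) (hcz i) (hcx i),
          show cVec (a, b j, x) (c i) y = 0 from incVec_left _ _ (hca i) (hcb i j) (hcx i)]
        ring
      rw [Finset.sum_eq_single_of_mem i (Finset.mem_univ i) hrest] at h
      rw [show cVec (a, z, c i) (c i) y = 0 from incVec_right _ _ hay.symm hyz (hcy i).symm,
        show cVec (c i, z, x) (c i) y = 0 from incVec_right _ _ (hcy i).symm hyz hxy.symm,
        show cVec (c i, x, y) (c i) y = (-1 : ℝ) from incVec_13 (hcx i) hxy (hcy i),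
        show cVec (b i, c i, y) (c i) y = (1 : ℝ) from incVec_23 (hbc i i) (hcy i) (hby i),
        show cVec (b i, y, z) (c i) y = 0 from incVec_left _ _ (hcb i i) (hcy i) (hcz i),
        show cVec (b i, z, x) (c i) y = 0 from incVec_left _ _ (hcb i i) (hcz i) (hcx i),
        show cVec (a, b i, x) (c i) y = 0 from incVec_left _ _ (hca i) (hcb i i) (hcx i)] at h
      linarith
    have eq4 : ∀ i : Fin d, β' (b i, y, z) = β' (b i, c i, y) := by
      intro i
      have h := hEval (b i) y
      rw [hold (b i) y (Or.inr (Or.inl rfl))] at h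
      rw [show cVec (x, y, a) (b i) y = 0 from incVec_left _ _ (hbx i) (hby i) (hba i),
        show cVec (a, y, z) (b i) y = 0 from incVec_left _ _ (hba i) (hby i) (hbz i),
        show cVec (x, z, y) (b i) y = 0 from incVec_left _ _ (hbx i) (hbz i) (hby i)] at h
      have hrest : ∀ j ∈ Finset.univ, j ≠ i →
          (β' (a, z, c j) * cVec (a, z, c j) (b i) y +
            β' (c j, z, x) * cVec (c j, z, x) (b i) y +
            β' (c j, x, y) * cVec (c j, x, y) (b i) y +
            β' (b j, c j, y) * cVec (b j, c j, y) (b i) y +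
            β' (b j, y, z) * cVec (b j, y, z) (b i) y +
            β' (b j, z, x) * cVec (b j, z, x) (b i) y +
            β' (a, b j, x) * cVec (a, b j, x) (b i) y) = 0 := by
        intro j _ hji
        have hcij : c i ≠ c j := fun e => hji (hc e).symm
        have hbij : b i ≠ b j := fun e => hji (hb e).symm
        rw [show cVec (a, z, c j) (b i) y = 0 from incVec_left _ _ (hba i) (hbz i) (hbc i j),
          show cVec (c j, z, x) (b i) y = 0 from incVec_left _ _ (hbc i j) (hbz i) (hbx i),
          show cVec (c j, x, y) (b i) y = 0 from incVec_left _ _ (hbc i j) (hbx i) (hby i),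
          show cVec (b j, c j, y) (b i) y = 0 from incVec_left _ _ hbij (hbc i j) (hby i),
          show cVec (b j, y, z) (b i) y = 0 from incVec_left _ _ hbij (hby i) (hbz i),
          show cVec (b j, z, x) (b i) y = 0 from incVec_left _ _ hbij (hbz i) (hbx i),
          show cVec (a, b j, x) (b i) y = 0 from incVec_left _ _ (hba i) hbij (hbx i)]
        ring
      rw [Finset.sum_eq_single_of_mem i (Finset.mem_univ i) hrest] at h
      rw [show cVec (a, z, c i) (b i) y = 0 from incVec_right _ _ hay.symm hyz (hcy i).symm,
        show cVec (c i, z, x) (b i) y = 0 from incVec_right _ _ (hcy i).symm hyz hxy.symm,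
        show cVec (c i, x, y) (b i) y = 0 from incVec_left _ _ (hbc i i) (hbx i) (hby i),
        show cVec (b i, c i, y) (b i) y = (-1 : ℝ) from incVec_13 (hbc i i) (hcy i) (hby i),
        show cVec (b i, y, z) (b i) y = (1 : ℝ) from incVec_12 (hby i) hyz (hbz i),
        show cVec (b i, z, x) (b i) y = 0 from incVec_right _ _ (hby i).symm hyz hxy.symm,
        show cVec (a, b i, x) (b i) y = 0 from incVec_right _ _ hay.symm (hby i).symm hxy.symm] at h
      linarith
    have eq5 : ∀ i : Fin d, β' (b i, z, x) = β' (b i, y, z) := by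
      intro i
      have h := hEval (b i) z
      rw [hold (b i) z (Or.inr (Or.inr rfl))] at h
      rw [show cVec (x, y, a) (b i) z = 0 from incVec_left _ _ (hbx i) (hby i) (hba i),
        show cVec (a, y, z) (b i) z = 0 from incVec_left _ _ (hba i) (hby i) (hbz i),
        show cVec (x, z, y) (b i) z = 0 from incVec_left _ _ (hbx i) (hbz i) (hby i)] at h
      have hrest : ∀ j ∈ Finset.univ, j ≠ i →
          (β' (a, z, c j) * cVec (a, z, c j) (b i) z +
            β' (c j, z, x) * cVec (c j, z, x) (b i) z +
            β' (c j, x, y) * cVec (c j, x, y) (b i) z +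
            β' (b j, c j, y) * cVec (b j, c j, y) (b i) z +
            β' (b j, y, z) * cVec (b j, y, z) (b i) z +
            β' (b j, z, x) * cVec (b j, z, x) (b i) z +
            β' (a, b j, x) * cVec (a, b j, x) (b i) z) = 0 := by
        intro j _ hji
        have hcij : c i ≠ c j := fun e => hji (hc e).symm
        have hbij : b i ≠ b j := fun e => hji (hb e).symm
        rw [show cVec (a, z, c j) (b i) z = 0 from incVec_left _ _ (hba i) (hbz i) (hbc i j),
          show cVec (c j, z, x) (b i) z = 0 from incVec_left _ _ (hbc i j) (hbz i) (hbx i),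
          show cVec (c j, x, y) (b i) z = 0 from incVec_left _ _ (hbc i j) (hbx i) (hby i),
          show cVec (b j, c j, y) (b i) z = 0 from incVec_left _ _ hbij (hbc i j) (hby i),
          show cVec (b j, y, z) (b i) z = 0 from incVec_left _ _ hbij (hby i) (hbz i),
          show cVec (b j, z, x) (b i) z = 0 from incVec_left _ _ hbij (hbz i) (hbx i),
          show cVec (a, b j, x) (b i) z = 0 from incVec_left _ _ (hba i) hbij (hbx i)]
        ring
      rw [Finset.sum_eq_single_of_mem i (Finset.mem_univ i) hrest] at h
      rw [show cVec (a, z, c i) (b i) z = 0 from incVec_left _ _ (hba i) (hbz i) (hbc i i),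
        show cVec (c i, z, x) (b i) z = 0 from incVec_left _ _ (hbc i i) (hbz i) (hbx i),
        show cVec (c i, x, y) (b i) z = 0 from incVec_right _ _ (hcz i).symm hxz.symm hyz.symm,
        show cVec (b i, c i, y) (b i) z = 0 from incVec_right _ _ (hbz i).symm (hcz i).symm hyz.symm,
        show cVec (b i, y, z) (b i) z = (-1 : ℝ) from incVec_13 (hby i) hyz (hbz i),
        show cVec (b i, z, x) (b i) z = (1 : ℝ) from incVec_12 (hbz i) hxz.symm (hbx i),
        show cVec (a, b i, x) (b i) z = 0 from incVec_right _ _ haz.symm (hbz i).symm hxz.symm] at h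
      linarith
    have eq6 : ∀ i : Fin d, β' (a, b i, x) = β' (b i, z, x) := by
      intro i
      have h := hEval (b i) x
      rw [hold (b i) x (Or.inl rfl)] at h
      rw [show cVec (x, y, a) (b i) x = 0 from incVec_left _ _ (hbx i) (hby i) (hba i),
        show cVec (a, y, z) (b i) x = 0 from incVec_left _ _ (hba i) (hby i) (hbz i),
        show cVec (x, z, y) (b i) x = 0 from incVec_left _ _ (hbx i) (hbz i) (hby i)] at h
      have hrest : ∀ j ∈ Finset.univ, j ≠ i →
          (β' (a, z, c j) * cVec (a, z, c j) (b i) x +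
            β' (c j, z, x) * cVec (c j, z, x) (b i) x +
            β' (c j, x, y) * cVec (c j, x, y) (b i) x +
            β' (b j, c j, y) * cVec (b j, c j, y) (b i) x +
            β' (b j, y, z) * cVec (b j, y, z) (b i) x +
            β' (b j, z, x) * cVec (b j, z, x) (b i) x +
            β' (a, b j, x) * cVec (a, b j, x) (b i) x) = 0 := by
        intro j _ hji
        have hcij : c i ≠ c j := fun e => hji (hc e).symm
        have hbij : b i ≠ b j := fun e => hji (hb e).symm
        rw [show cVec (a, z, c j) (b i) x = 0 from incVec_left _ _ (hba i) (hbz i) (hbc i j),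
          show cVec (c j, z, x) (b i) x = 0 from incVec_left _ _ (hbc i j) (hbz i) (hbx i),
          show cVec (c j, x, y) (b i) x = 0 from incVec_left _ _ (hbc i j) (hbx i) (hby i),
          show cVec (b j, c j, y) (b i) x = 0 from incVec_left _ _ hbij (hbc i j) (hby i),
          show cVec (b j, y, z) (b i) x = 0 from incVec_left _ _ hbij (hby i) (hbz i),
          show cVec (b j, z, x) (b i) x = 0 from incVec_left _ _ hbij (hbz i) (hbx i),
          show cVec (a, b j, x) (b i) x = 0 from incVec_left _ _ (hba i) hbij (hbx i)]
        ring
      rw [Finset.sum_eq_single_of_mem i (Finset.mem_univ i) hrest] at h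
      rw [show cVec (a, z, c i) (b i) x = 0 from incVec_right _ _ hax.symm hxz (hcx i).symm,
        show cVec (c i, z, x) (b i) x = 0 from incVec_left _ _ (hbc i i) (hbz i) (hbx i),
        show cVec (c i, x, y) (b i) x = 0 from incVec_left _ _ (hbc i i) (hbx i) (hby i),
        show cVec (b i, c i, y) (b i) x = 0 from incVec_right _ _ (hbx i).symm (hcx i).symm hxy,
        show cVec (b i, y, z) (b i) x = 0 from incVec_right _ _ (hbx i).symm hxy hxz,
        show cVec (b i, z, x) (b i) x = (-1 : ℝ) from incVec_13 (hbz i) hxz.symm (hbx i),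
        show cVec (a, b i, x) (b i) x = (1 : ℝ) from incVec_23 (hab' i) (hbx i) hax] at h
      linarith
    have eqB1 : β' (x, y, a) = ∑ j, β' (a, b j, x) := by
      have h := hEval a x
      rw [hold a x (Or.inl rfl)] at h
      rw [show cVec (x, y, a) a x = (1 : ℝ) from incVec_31 hxy hay.symm hax.symm,
        show cVec (a, y, z) a x = 0 from incVec_right _ _ hax.symm hxy hxz,
        show cVec (x, z, y) a x = 0 from incVec_left _ _ hax haz hay] at h
      have hcong : ∀ j ∈ Finset.univ,
          (β' (a, z, c j) * cVec (a, z, c j) a x +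
            β' (c j, z, x) * cVec (c j, z, x) a x +
            β' (c j, x, y) * cVec (c j, x, y) a x +
            β' (b j, c j, y) * cVec (b j, c j, y) a x +
            β' (b j, y, z) * cVec (b j, y, z) a x +
            β' (b j, z, x) * cVec (b j, z, x) a x +
            β' (a, b j, x) * cVec (a, b j, x) a x) = -β' (a, b j, x) := by
        intro j _
        rw [show cVec (a, z, c j) a x = 0 from incVec_right _ _ hax.symm hxz (hcx j).symm,
          show cVec (c j, z, x) a x = 0 from incVec_left _ _ (hac' j) haz hax,
          show cVec (c j, x, y) a x = 0 from incVec_left _ _ (hac' j) hax hay,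
          show cVec (b j, c j, y) a x = 0 from incVec_right _ _ (hbx j).symm (hcx j).symm hxy,
          show cVec (b j, y, z) a x = 0 from incVec_right _ _ (hbx j).symm hxy hxz,
          show cVec (b j, z, x) a x = 0 from incVec_left _ _ (hab' j) haz hax,
          show cVec (a, b j, x) a x = (-1 : ℝ) from incVec_13 (hab' j) (hbx j) hax]
        ring
      rw [Finset.sum_congr rfl hcong, Finset.sum_neg_distrib] at h
      linarith
    have eqB2 : β' (a, y, z) = ∑ j, β' (a, z, c j) := by
      have h := hEval a z
      rw [hold a z (Or.inr (Or.inr rfl))] at h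
      rw [show cVec (x, y, a) a z = 0 from incVec_right _ _ hxz.symm hyz.symm haz.symm,
        show cVec (a, y, z) a z = (-1 : ℝ) from incVec_13 hay hyz haz,
        show cVec (x, z, y) a z = 0 from incVec_left _ _ hax haz hay] at h
      have hcong : ∀ j ∈ Finset.univ,
          (β' (a, z, c j) * cVec (a, z, c j) a z +
            β' (c j, z, x) * cVec (c j, z, x) a z +
            β' (c j, x, y) * cVec (c j, x, y) a z +
            β' (b j, c j, y) * cVec (b j, c j, y) a z +
            β' (b j, y, z) * cVec (b j, y, z) a z +
            β' (b j, z, x) * cVec (b j, z, x) a z +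
            β' (a, b j, x) * cVec (a, b j, x) a z) = β' (a, z, c j) := by
        intro j _
        rw [show cVec (a, z, c j) a z = (1 : ℝ) from incVec_12 haz (hcz j).symm (hac' j),
          show cVec (c j, z, x) a z = 0 from incVec_left _ _ (hac' j) haz hax,
          show cVec (c j, x, y) a z = 0 from incVec_right _ _ (hcz j).symm hxz.symm hyz.symm,
          show cVec (b j, c j, y) a z = 0 from incVec_right _ _ (hbz j).symm (hcz j).symm hyz.symm,
          show cVec (b j, y, z) a z = 0 from incVec_left _ _ (hab' j) hay haz,
          show cVec (b j, z, x) a z = 0 from incVec_left _ _ (hab' j) haz hax,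
          show cVec (a, b j, x) a z = 0 from incVec_right _ _ haz.symm (hbz j).symm hxz.symm]
        ring
      rw [Finset.sum_congr rfl hcong] at h
      linarith
    have eqB3 : β' (x, z, y) = ∑ j, (β' (c j, z, x) + β' (b j, z, x)) := by
      have h := hEval x z
      rw [hold x z (Or.inr (Or.inr rfl))] at h
      rw [show cVec (x, y, a) x z = 0 from incVec_right _ _ hxz.symm hyz.symm haz.symm,
        show cVec (a, y, z) x z = 0 from incVec_left _ _ hax.symm hxy hxz,
        show cVec (x, z, y) x z = (1 : ℝ) from incVec_12 hxz hyz.symm hxy] at h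
      have hcong : ∀ j ∈ Finset.univ,
          (β' (a, z, c j) * cVec (a, z, c j) x z +
            β' (c j, z, x) * cVec (c j, z, x) x z +
            β' (c j, x, y) * cVec (c j, x, y) x z +
            β' (b j, c j, y) * cVec (b j, c j, y) x z +
            β' (b j, y, z) * cVec (b j, y, z) x z +
            β' (b j, z, x) * cVec (b j, z, x) x z +
            β' (a, b j, x) * cVec (a, b j, x) x z) = -(β' (c j, z, x) + β' (b j, z, x)) := by
        intro j _
        rw [show cVec (a, z, c j) x z = 0 from incVec_left _ _ hax.symm hxz (hcx j).symm,
          show cVec (c j, z, x) x z = (-1 : ℝ) from incVec_32 (hcz j) hxz.symm (hcx j),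
          show cVec (c j, x, y) x z = 0 from incVec_right _ _ (hcz j).symm hxz.symm hyz.symm,
          show cVec (b j, c j, y) x z = 0 from incVec_right _ _ (hbz j).symm (hcz j).symm hyz.symm,
          show cVec (b j, y, z) x z = 0 from incVec_left _ _ (hbx j).symm hxy hxz,
          show cVec (b j, z, x) x z = (-1 : ℝ) from incVec_32 (hbz j) hxz.symm (hbx j),
          show cVec (a, b j, x) x z = 0 from incVec_right _ _ haz.symm (hbz j).symm hxz.symm]
        ring
      rw [Finset.sum_congr rfl hcong, Finset.sum_neg_distrib] at h
      linarith
    -- common block value t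
    set t : Fin d → ℝ := fun i => β' (b i, c i, y) with ht
    have ht4 : ∀ i, β' (b i, c i, y) = t i := fun i => rfl
    have ht3 : ∀ i, β' (c i, x, y) = t i := fun i => (eq3 i).symm.trans (ht4 i)
    have ht2 : ∀ i, β' (c i, z, x) = t i := fun i => (eq2 i).symm.trans (ht3 i)
    have ht1 : ∀ i, β' (a, z, c i) = t i := fun i => (eq1 i).symm.trans (ht2 i)
    have ht5 : ∀ i, β' (b i, y, z) = t i := fun i => (eq4 i).trans (ht4 i)
    have ht6 : ∀ i, β' (b i, z, x) = t i := fun i => (eq5 i).trans (ht5 i)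
    have ht7 : ∀ i, β' (a, b i, x) = t i := fun i => (eq6 i).trans (ht6 i)
    have htnonneg : ∀ i, 0 ≤ t i := fun i => (ht4 i) ▸ hβ'nonneg (b i, c i, y)
    set T' : ℝ := ∑ j, t j with hT'
    have eqB1' : β' (x, y, a) = T' := by
      rw [eqB1, Finset.sum_congr rfl (fun j _ => ht7 j), hT']
    have eqB2' : β' (a, y, z) = T' := by
      rw [eqB2, Finset.sum_congr rfl (fun j _ => ht1 j), hT']
    have eqB3' : β' (x, z, y) = T' + T' := by
      rw [eqB3, Finset.sum_congr rfl (fun j _ => by rw [ht2 j, ht6 j]),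
        Finset.sum_add_distrib, hT']
    -- function-valued consequences
    have hGF0 : ∑ p ∈ G \ F, β' p • cVec p +
        (∑ p ∈ B, β' p • cVec p + ∑ i, ∑ p ∈ N i, β' p • cVec p) = 0 := by
      rw [← add_assoc, ← hsplitF (fun p => β' p • cVec p)]
      exact hsum0
    have hblockC : ∀ i : Fin d, cVec (a, z, c i) + cVec (c i, z, x) + cVec (c i, x, y) +
        cVec (b i, c i, y) + cVec (b i, y, z) + cVec (b i, z, x) + cVec (a, b i, x) =
        cVec (a, b i, c i) + R := by
      intro i
      rw [hR]
      exact block_identity a (b i) (c i) x y z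
    have hNsumval : ∀ i : Fin d, ∑ p ∈ N i, β' p • cVec p =
        t i • cVec (a, b i, c i) + t i • R := by
      intro i
      rw [hNexpF i (fun p => β' p • cVec p)]
      rw [ht1 i, ht2 i, ht3 i, ht4 i, ht5 i, ht6 i, ht7 i]
      simp only [← smul_add]
      rw [hblockC i, smul_add]
    have hBsumval : ∑ p ∈ B, β' p • cVec p =
        T' • cVec (x, y, a) + T' • cVec (a, y, z) + (T' + T') • cVec (x, z, y) := by
      rw [hBexpF (fun p => β' p • cVec p)]
      rw [eqB1', eqB2', eqB3']
    rw [hBsumval, Finset.sum_congr rfl (fun i _ => hNsumval i), Finset.sum_add_distrib,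
      ← Finset.sum_smul, ← hT'] at hGF0
    -- the induced weighting on G
    set γ : (V × V × V) → ℝ := fun p =>
      β' p + ∑ i, (if p = (a, b i, c i) then t i else 0) with hγ
    have hγnonneg : ∀ p, 0 ≤ γ p := by
      intro p
      simp only [hγ]
      have h2 : 0 ≤ ∑ i, (if p = (a, b i, c i) then t i else 0) :=
        Finset.sum_nonneg (fun i _ => by split; exacts [htnonneg i, le_rfl])
      linarith [hβ'nonneg p]
    have hβ'F0 : ∀ i, β' (a, b i, c i) = 0 :=
      fun i => hβ'zero _ (fun hcmem => hFnotG' i (hCsub hcmem))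
    have hγF : ∀ i, γ (a, b i, c i) = t i := by
      intro i
      simp only [hγ]
      rw [hβ'F0 i, zero_add]
      rw [Finset.sum_eq_single_of_mem i (Finset.mem_univ i) (fun j _ hji =>
        if_neg (fun e => hji (hb (congrArg (fun q => q.2.1) e)).symm))]
      exact if_pos rfl
    have hγGF : ∀ p ∈ G \ F, γ p = β' p := by
      intro p hp
      simp only [hγ]
      rw [Finset.sum_eq_zero (fun i _ => if_neg (fun e => (Finset.mem_sdiff.1 hp).2
        (by rw [e]; exact Finset.mem_image.2 ⟨i, Finset.mem_univ i, rfl⟩))), add_zero]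
    have hγG : ∑ p ∈ G, γ p • cVec p = 0 := by
      have hstep1 : ∑ p ∈ G, γ p • cVec p =
          ∑ p ∈ G, β' p • cVec p + ∑ i, t i • cVec (a, b i, c i) := by
        simp only [hγ, add_smul]
        rw [Finset.sum_add_distrib]
        congr 1
        have hterm : ∀ p, (∑ i, (if p = (a, b i, c i) then t i else 0)) • cVec p =
            ∑ i, (if p = (a, b i, c i) then t i • cVec p else 0) := by
          intro p
          rw [Finset.sum_smul]
          exact Finset.sum_congr rfl (fun i _ => by rw [ite_smul, zero_smul])
        rw [Finset.sum_congr rfl (fun p _ => hterm p), Finset.sum_comm]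
        exact Finset.sum_congr rfl (fun i _ => by
          rw [Finset.sum_ite_eq' G (a, b i, c i), if_pos (hmem i)])
      have hstep2 : ∑ p ∈ G, β' p • cVec p = ∑ p ∈ G \ F, β' p • cVec p := by
        refine (Finset.sum_subset Finset.sdiff_subset (fun p hpG hpn => ?_)).symm
        have hpF : p ∈ F := by
          by_contra hpF
          exact hpn (Finset.mem_sdiff.2 ⟨hpG, hpF⟩)
        rcases Finset.mem_image.1 hpF with ⟨i, -, rfl⟩
        rw [hβ'F0 i, zero_smul]
      rw [hstep1, hstep2]
      have hb0 : T' • cVec (x, y, a) + T' • cVec (a, y, z) +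
          (T' • cVec (x, z, y) + T' • cVec (x, z, y)) + T' • R = 0 := by
        have hsm : T' • (cVec (x, y, a) + cVec (a, y, z) +
            (cVec (x, z, y) + cVec (x, z, y)) + R) = 0 := by rw [hbaseF, smul_zero]
        simp only [smul_add] at hsm
        exact hsm
      simp only [add_smul] at hGF0
      rw [eq_neg_of_add_eq_zero_left hGF0, eq_neg_of_add_eq_zero_left hb0]
      abel
    -- conclude
    by_cases hC0 : (G.filter (fun p => 0 < γ p)).Nonempty
    · have hcyc : IsCycleOn G (G.filter (fun p => 0 < γ p)) := by
        refine ⟨hC0, Finset.filter_subset _ _, γ, fun p hp => (Finset.mem_filter.1 hp).2, ?_⟩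
        rw [Finset.sum_subset (Finset.filter_subset _ _) (fun p hpG hpn => ?_)]
        · exact hγG
        · have : ¬ 0 < γ p := fun hlt => hpn (Finset.mem_filter.2 ⟨hpG, hlt⟩)
          rw [le_antisymm (not_lt.1 this) (hγnonneg p), zero_smul]
      have hC0G := hGuniq _ hcyc
      have hγposG : ∀ p ∈ G, 0 < γ p := by
        intro p hp
        have : p ∈ G.filter (fun p => 0 < γ p) := hC0G.symm ▸ hp
        exact (Finset.mem_filter.1 this).2
      have htpos : ∀ i, 0 < t i := fun i => (hγF i) ▸ hγposG _ (hmem i)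
      have hT'pos : 0 < T' := by
        have : Nonempty (Fin d) := ⟨i0⟩
        rw [hT']
        exact Finset.sum_pos (fun j _ => htpos j) Finset.univ_nonempty
      apply Finset.Subset.antisymm hCsub
      intro p hp
      rw [hG''] at hp
      rcases Finset.mem_union.1 hp with h | h
      · refine hmemC p ?_
        rw [← hγGF p h]
        exact hγposG p (Finset.mem_sdiff.1 h).1
      rcases Finset.mem_union.1 h with h | h
      · simp only [hB, Finset.mem_insert, Finset.mem_singleton] at h
        rcases h with rfl | rfl | rfl
        · exact hmemC _ (by rw [eqB1']; exact hT'pos)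
        · exact hmemC _ (by rw [eqB2']; exact hT'pos)
        · exact hmemC _ (by rw [eqB3']; linarith)
      · rcases Finset.mem_biUnion.1 h with ⟨j, -, hj⟩
        simp only [hN, Finset.mem_insert, Finset.mem_singleton] at hj
        rcases hj with rfl | rfl | rfl | rfl | rfl | rfl | rfl
        · exact hmemC _ (by rw [ht1 j]; exact htpos j)
        · exact hmemC _ (by rw [ht2 j]; exact htpos j)
        · exact hmemC _ (by rw [ht3 j]; exact htpos j)
        · exact hmemC _ (by rw [ht4 j]; exact htpos j)
        · exact hmemC _ (by rw [ht5 j]; exact htpos j)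
        · exact hmemC _ (by rw [ht6 j]; exact htpos j)
        · exact hmemC _ (by rw [ht7 j]; exact htpos j)
    · exfalso
      rw [Finset.not_nonempty_iff_eq_empty] at hC0
      have hγ0 : ∀ p ∈ G, γ p = 0 := by
        intro p hp
        by_contra hne
        have hlt : 0 < γ p := lt_of_le_of_ne (hγnonneg p) (Ne.symm hne)
        have : p ∈ G.filter (fun p => 0 < γ p) := Finset.mem_filter.2 ⟨hp, hlt⟩
        rw [hC0] at this
        exact Finset.notMem_empty p this
      have ht0 : ∀ i, t i = 0 := fun i => (hγF i).symm.trans (hγ0 _ (hmem i))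
      have hT'0 : T' = 0 := by
        rw [hT']
        exact Finset.sum_eq_zero (fun j _ => ht0 j)
      obtain ⟨q, hq⟩ := hCne
      have hβq : 0 < β' q := by
        simp only [hβ']
        rw [if_pos hq]
        exact hβpos q hq
      have hq' := hCsub hq
      rw [hG''] at hq'
      rcases Finset.mem_union.1 hq' with h | h
      · have : β' q = 0 := by
          rw [← hγGF q h]
          exact hγ0 q (Finset.mem_sdiff.1 h).1
        rw [this] at hβq
        exact lt_irrefl 0 hβq
      rcases Finset.mem_union.1 h with h | h
      · simp only [hB, Finset.mem_insert, Finset.mem_singleton] at h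
        rcases h with rfl | rfl | rfl
        · rw [eqB1', hT'0] at hβq; exact lt_irrefl 0 hβq
        · rw [eqB2', hT'0] at hβq; exact lt_irrefl 0 hβq
        · rw [eqB3', hT'0] at hβq; simp at hβq
      · rcases Finset.mem_biUnion.1 h with ⟨j, -, hj⟩
        simp only [hN, Finset.mem_insert, Finset.mem_singleton] at hj
        rcases hj with rfl | rfl | rfl | rfl | rfl | rfl | rfl
        · rw [ht1 j, ht0 j] at hβq; exact lt_irrefl 0 hβq
        · rw [ht2 j, ht0 j] at hβq; exact lt_irrefl 0 hβq
        · rw [ht3 j, ht0 j] at hβq; exact lt_irrefl 0 hβq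
        · rw [ht4 j, ht0 j] at hβq; exact lt_irrefl 0 hβq
        · rw [ht5 j, ht0 j] at hβq; exact lt_irrefl 0 hβq
        · rw [ht6 j, ht0 j] at hβq; exact lt_irrefl 0 hβq
        · rw [ht7 j, ht0 j] at hβq; exact lt_irrefl 0 hβq
  exact ⟨⟨hcycG', hmin⟩, hvcard, hG'card, hstar⟩
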